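/- For X₁,…,Xₙ i.i.d. Bernoulli(p), the quantity r₂(i,Xⁿ) := Σ_{j=1}^n E[(E[X_j] − E[X_j | X_(i)])²] equals n p² [P(B′<i)²/P(B<i) + P(B′≥i)²/P(B≥i) − 1], where B ~ Binomial(n,1−p) and B′ ~ Binomial(n−1,1−p). -/

import Mathlib

open MeasureTheory ProbabilityTheory Real Filter Topology

/-- The `m`-th order statistic (1-based index) of the finite sample `X`. -/
noncomputable def orderStat {Ω : Type*} {n : ℕ} (X : Fin n → Ω → ℝ) (m : ℕ) (ω : Ω) : ℝ :=
  if h : m - 1 < n then (fun j => X j ω) (Tuple.sort (fun j => X j ω) ⟨m - 1, h⟩) else 0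

/-- `P(B < i)` for `B ~ Binomial(n, 1 - p)`. -/
noncomputable def binomLT (n : ℕ) (p : ℝ) (i : ℕ) : ℝ :=
  ∑ k ∈ Finset.range i, (n.choose k : ℝ) * (1 - p) ^ k * p ^ (n - k)

/-- The Bernoulli law with success probability `p`, as a measure on `ℝ`. -/
noncomputable def bernoulliLaw (p : ℝ) : Measure ℝ :=
  ENNReal.ofReal (1 - p) • Measure.dirac 0 + ENNReal.ofReal p • Measure.dirac 1


section Aux
noncomputable section
open Finset Classical
set_option linter.unusedSectionVars false
set_option linter.unusedVariables false

/-- A downward-closed subset of `Fin n` is an initial segment. -/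
lemma dcl_mem_iff {n : ℕ} (S : Finset (Fin n)) (hS : ∀ k l : Fin n, l ≤ k → k ∈ S → l ∈ S)
    (k : Fin n) : k ∈ S ↔ (k : ℕ) < S.card := by
  constructor
  · intro hk
    have h1 : Finset.Iic k ⊆ S := fun l hl => hS k l (Finset.mem_Iic.1 hl) hk
    have := Finset.card_le_card h1
    rw [Fin.card_Iic] at this
    omega
  · intro hk
    by_contra hks
    have h1 : S ⊆ Finset.Iio k := by
      intro l hl
      rw [Finset.mem_Iio]
      by_contra hlk
      exact hks (hS l k (le_of_not_gt hlk) hl)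
    have := Finset.card_le_card h1
    rw [Fin.card_Iio] at this
    omega

lemma card_filter_comp_sort {n : ℕ} (v : Fin n → ℝ) (P : ℝ → Prop) [DecidablePred P] :
    (univ.filter fun k => P (v (Tuple.sort v k))).card = (univ.filter fun j => P (v j)).card := by
  apply Finset.card_bij (fun k _ => Tuple.sort v k)
  · intro k hk; simp only [mem_filter, mem_univ, true_and] at hk ⊢; exact hk
  · intro a ha b hb hab; exact (Tuple.sort v).injective hab
  · intro j hj
    refine ⟨(Tuple.sort v).symm j, ?_, by simp⟩
    simp only [mem_filter, mem_univ, true_and] at hj ⊢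
    simpa using hj

lemma sort_le_iff {n : ℕ} (v : Fin n → ℝ) (m : Fin n) (t : ℝ) :
    v (Tuple.sort v m) ≤ t ↔ (m : ℕ) < (univ.filter fun j => v j ≤ t).card := by
  set K : Finset (Fin n) := univ.filter fun k => v (Tuple.sort v k) ≤ t with hK
  have hdc : ∀ k l : Fin n, l ≤ k → k ∈ K → l ∈ K := by
    intro k l hlk hk
    simp only [hK, mem_filter, mem_univ, true_and] at hk ⊢
    exact le_trans (Tuple.monotone_sort v hlk) hk
  have h1 : m ∈ K ↔ (m : ℕ) < K.card := dcl_mem_iff K hdc m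
  have h2 : K.card = (univ.filter fun j => v j ≤ t).card := card_filter_comp_sort v (· ≤ t)
  simp only [hK, mem_filter, mem_univ, true_and] at h1
  rw [h1, h2]
-- from t3

/-- value of sorted binary tuple -/
lemma sort_binary {n : ℕ} (v : Fin n → ℝ) (hv : ∀ j, v j = 0 ∨ v j = 1) (m : Fin n) :
    v (Tuple.sort v m) = if (m : ℕ) < (univ.filter fun j => v j = 0).card then 0 else 1 := by
  have hfe : (univ.filter fun j => v j ≤ (1:ℝ)/2) = (univ.filter fun j => v j = 0) := by
    apply Finset.filter_congr
    intro j _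
    rcases hv j with h | h <;> simp [h] <;> norm_num
  have hle := sort_le_iff v m (1/2)
  rw [hfe] at hle
  rcases hv (Tuple.sort v m) with h | h <;> rw [h]
  · rw [if_pos (hle.1 (by norm_num [h]))]
  · rw [if_neg]
    intro hlt
    have := hle.2 hlt
    rw [h] at this; norm_num at this

/-- Measurability of `orderStat`. -/
lemma measurable_orderStat {Ω : Type*} [MeasurableSpace Ω] {n : ℕ} (X : Fin n → Ω → ℝ)
    (hmeas : ∀ j, Measurable (X j)) (i : ℕ) : Measurable (orderStat X i) := by
  unfold orderStat
  by_cases h : i - 1 < n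
  · simp only [dif_pos h]
    apply measurable_of_Iic
    intro t
    have hset : (fun ω => (fun j => X j ω) (Tuple.sort (fun j => X j ω) ⟨i-1, h⟩)) ⁻¹' Set.Iic t
        = {ω | (i - 1 : ℕ) < (univ.filter fun j => X j ω ≤ t).card} := by
      ext ω
      simp only [Set.mem_preimage, Set.mem_Iic, Set.mem_setOf_eq]
      exact sort_le_iff (fun j => X j ω) ⟨i-1, h⟩ t
    rw [hset]
    have hcard : Measurable fun ω => (univ.filter fun j => X j ω ≤ t).card := by
      have : (fun ω => (univ.filter fun j => X j ω ≤ t).card)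
          = fun ω => ∑ j : Fin n, if X j ω ≤ t then 1 else 0 := by
        funext ω; exact Finset.card_filter _ _
      rw [this]
      exact Finset.measurable_sum _ fun j _ =>
        Measurable.ite (measurableSet_le (hmeas j) measurable_const)
          measurable_const measurable_const
    exact measurableSet_lt measurable_const hcard
  · simp only [dif_neg h]; exact measurable_const

lemma bernoulliLaw_apply (p : ℝ) (s : Set ℝ) (hs : MeasurableSet s) :
    bernoulliLaw p s = (if (0:ℝ) ∈ s then ENNReal.ofReal (1-p) else 0)
      + (if (1:ℝ) ∈ s then ENNReal.ofReal p else 0) := by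
  simp [bernoulliLaw, Measure.dirac_apply' _ hs, Set.indicator_apply]

section
variable {Ω : Type*} [MeasurableSpace Ω] (μ : Measure Ω) [IsProbabilityMeasure μ]
  {n : ℕ} {p : ℝ} (hp0 : 0 ≤ p) (hp1 : p ≤ 1) (X : Fin n → Ω → ℝ)
  (hmeas : ∀ j, Measurable (X j))
  (hlaw : ∀ j, Measure.map (X j) μ = bernoulliLaw p)

include hmeas hlaw

lemma meas_pre (j : Fin n) (s : Set ℝ) (hs : MeasurableSet s) :
    μ (X j ⁻¹' s) = (if (0:ℝ) ∈ s then ENNReal.ofReal (1-p) else 0)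
      + (if (1:ℝ) ∈ s then ENNReal.ofReal p else 0) := by
  rw [← Measure.map_apply (hmeas j) hs, hlaw j, bernoulliLaw_apply]
  exact hs

lemma ae_binary : ∀ᵐ ω ∂μ, ∀ j, X j ω = 0 ∨ X j ω = 1 := by
  rw [MeasureTheory.ae_all_iff]
  intro j
  have h : μ (X j ⁻¹' ({0,1} : Set ℝ)ᶜ) = 0 := by
    rw [meas_pre μ X hmeas hlaw j _ (MeasurableSet.compl (by measurability))]
    simp
  have : ∀ᵐ ω ∂μ, X j ω ∈ ({0,1} : Set ℝ) := by
    rw [MeasureTheory.ae_iff]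
    exact h
  filter_upwards [this] with ω hω
  simpa using hω

end

section
variable {Ω : Type*} [MeasurableSpace Ω] (μ : Measure Ω) [IsProbabilityMeasure μ]
  {n : ℕ} {p : ℝ} (X : Fin n → Ω → ℝ)

/-- pattern event -/
def patE (X : Fin n → Ω → ℝ) (S : Finset (Fin n)) : Set Ω :=
  ⋂ j, X j ⁻¹' {if j ∈ S then (0:ℝ) else 1}

lemma patE_measurable (hmeas : ∀ j, Measurable (X j)) (S : Finset (Fin n)) :
    MeasurableSet (patE X S) :=
  MeasurableSet.iInter fun j => (hmeas j) (measurableSet_singleton _)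

lemma patE_disjoint (S S' : Finset (Fin n)) (h : S ≠ S') :
    Disjoint (patE X S) (patE X S') := by
  rw [Set.disjoint_left]
  intro ω h1 h2
  obtain ⟨j, hj⟩ : ∃ j, (j ∈ S ∧ j ∉ S') ∨ (j ∉ S ∧ j ∈ S') := by
    by_contra hc
    push_neg at hc
    exact h (Finset.ext fun j => by have := hc j; tauto)
  have e1 := Set.mem_iInter.1 h1 j
  have e2 := Set.mem_iInter.1 h2 j
  simp only [Set.mem_preimage, Set.mem_singleton_iff] at e1 e2
  rcases hj with ⟨ha, hb⟩ | ⟨ha, hb⟩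
  · rw [if_pos ha] at e1; rw [if_neg hb] at e2; rw [e1] at e2; norm_num at e2
  · rw [if_neg ha] at e1; rw [if_pos hb] at e2; rw [e2] at e1; norm_num at e1

lemma patE_meas (hp0 : 0 ≤ p) (hp1 : p ≤ 1) (hmeas : ∀ j, Measurable (X j))
    (hind : iIndepFun X μ)
    (hlaw : ∀ j, Measure.map (X j) μ = bernoulliLaw p) (S : Finset (Fin n)) :
    μ (patE X S) = ENNReal.ofReal ((1 - p) ^ S.card * p ^ (n - S.card)) := by
  have key := (iIndepFun_iff_measure_inter_preimage_eq_mul.1 hind) Finset.univ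
    (sets := fun j => {if j ∈ S then (0:ℝ) else 1})
    (fun j _ => measurableSet_singleton _)
  have hE : patE X S = ⋂ j ∈ Finset.univ, X j ⁻¹' {if j ∈ S then (0:ℝ) else 1} := by
    simp [patE]
  rw [hE, key]
  have hval : ∀ j : Fin n, μ (X j ⁻¹' {if j ∈ S then (0:ℝ) else 1})
      = ENNReal.ofReal (if j ∈ S then 1 - p else p) := by
    intro j
    rw [meas_pre μ X hmeas hlaw j _ (measurableSet_singleton _)]
    by_cases hj : j ∈ S <;> simp [hj]
  simp_rw [hval]
  rw [← ENNReal.ofReal_prod_of_nonneg (fun j _ => by split <;> [linarith; exact hp0])]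
  congr 1
  rw [Finset.prod_ite]
  simp only [Finset.prod_const]
  congr 1
  · congr 1; simp [Finset.filter_mem_eq_inter]
  · congr 1
    rw [Finset.filter_not, Finset.card_sdiff_of_subset (by simp [Finset.filter_mem_eq_inter])]
    simp [Finset.filter_mem_eq_inter]
end

section
variable {Ω : Type*} [MeasurableSpace Ω] (μ : Measure Ω) [IsProbabilityMeasure μ]
  {n : ℕ} {p : ℝ} (X : Fin n → Ω → ℝ)

lemma mem_patE_iff (S : Finset (Fin n)) (ω : Ω) :
    ω ∈ patE X S ↔ (∀ j ∈ S, X j ω = 0) ∧ (∀ j ∉ S, X j ω = 1) := by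
  simp only [patE, Set.mem_iInter, Set.mem_preimage, Set.mem_singleton_iff]
  constructor
  · intro h
    exact ⟨fun j hj => by simpa [hj] using h j, fun j hj => by simpa [hj] using h j⟩
  · intro ⟨h1, h2⟩ j
    by_cases hj : j ∈ S <;> simp [hj, h1, h2]

lemma zeroset_of_patE (S : Finset (Fin n)) (ω : Ω) (h : ω ∈ patE X S) :
    (Finset.univ.filter fun j => X j ω = 0) = S := by
  rw [mem_patE_iff] at h
  ext j
  simp only [Finset.mem_filter, Finset.mem_univ, true_and]
  constructor
  · intro hz; by_contra hj; rw [h.2 j hj] at hz; norm_num at hz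
  · exact h.1 j

lemma meas_eq_sum_patE (hmeas : ∀ j, Measurable (X j))
    (hlaw : ∀ j, Measure.map (X j) μ = bernoulliLaw p)
    (A : Set Ω) (𝒮 : Finset (Finset (Fin n)))
    (hsub : ∀ S ∈ 𝒮, patE X S ⊆ A)
    (hsup : ∀ ω, (∀ j, X j ω = 0 ∨ X j ω = 1) → ω ∈ A →
      (Finset.univ.filter fun j => X j ω = 0) ∈ 𝒮) :
    μ A = ∑ S ∈ 𝒮, μ (patE X S) := by
  set U : Set Ω := ⋃ S ∈ 𝒮, patE X S with hU
  have hUA : U ⊆ A := Set.iUnion₂_subset hsub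
  have hmU : μ U = ∑ S ∈ 𝒮, μ (patE X S) := by
    apply measure_biUnion_finset
    · intro S hS S' hS' hne
      exact patE_disjoint X S S' hne
    · exact fun S _ => patE_measurable X hmeas S
  have hnull : μ (A \ U) = 0 := by
    have hsubG : A \ U ⊆ {ω | ¬ ∀ j, X j ω = 0 ∨ X j ω = 1} := by
      intro ω ⟨hA, hnU⟩
      intro hbin
      apply hnU
      set S := Finset.univ.filter fun j => X j ω = 0 with hS
      have hSmem : S ∈ 𝒮 := hsup ω hbin hA
      have : ω ∈ patE X S := by
        rw [mem_patE_iff]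
        refine ⟨fun j hj => (Finset.mem_filter.1 hj).2, fun j hj => ?_⟩
        rcases hbin j with h0 | h1
        · exact absurd (Finset.mem_filter.2 ⟨Finset.mem_univ j, h0⟩) hj
        · exact h1
      exact Set.mem_biUnion hSmem this
    apply measure_mono_null hsubG
    exact ae_binary μ X hmeas hlaw
  refine le_antisymm ?_ (hmU ▸ measure_mono hUA)
  calc μ A ≤ μ (U ∪ (A \ U)) := measure_mono (fun ω hω => by
        by_cases h : ω ∈ U
        · exact Or.inl h
        · exact Or.inr ⟨hω, h⟩)
    _ ≤ μ U + μ (A \ U) := measure_union_le _ _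
    _ = μ U := by rw [hnull, add_zero]
    _ = _ := hmU

end

section
variable {Ω : Type*} [MeasurableSpace Ω] (μ : Measure Ω) [IsProbabilityMeasure μ]
  {n : ℕ} {p : ℝ} (X : Fin n → Ω → ℝ)

lemma sum_patE_powersetCard (hp0 : 0 ≤ p) (hp1 : p ≤ 1) (hmeas : ∀ j, Measurable (X j))
    (hind : iIndepFun X μ)
    (hlaw : ∀ j, Measure.map (X j) μ = bernoulliLaw p)
    (i : ℕ) (hin : i ≤ n) (T : Finset (Fin n)) :
    ∑ S ∈ (Finset.range i).biUnion (fun k => Finset.powersetCard k T), μ (patE X S)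
      = ∑ k ∈ Finset.range i, (T.card.choose k : ℕ) * ENNReal.ofReal ((1-p)^k * p^(n-k)) := by
  rw [Finset.sum_biUnion]
  · apply Finset.sum_congr rfl
    intro k hk
    have : ∀ S ∈ Finset.powersetCard k T, μ (patE X S) = ENNReal.ofReal ((1-p)^k * p^(n-k)) := by
      intro S hS
      rw [patE_meas μ X hp0 hp1 hmeas hind hlaw S, (Finset.mem_powersetCard.1 hS).2]
    rw [Finset.sum_congr rfl this, Finset.sum_const, Finset.card_powersetCard, nsmul_eq_mul]
  · intro a _ b _ hab
    simp only [Function.onFun, Finset.disjoint_left]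
    intro S hSa hSb
    rw [Finset.mem_coe] at *
    exact hab ((Finset.mem_powersetCard.1 hSa).2 ▸ (Finset.mem_powersetCard.1 hSb).2.symm ▸ rfl)

lemma meas_Zlt (hp0 : 0 ≤ p) (hp1 : p ≤ 1) (hmeas : ∀ j, Measurable (X j))
    (hind : iIndepFun X μ)
    (hlaw : ∀ j, Measure.map (X j) μ = bernoulliLaw p)
    (i : ℕ) (hin : i ≤ n) :
    μ {ω | (Finset.univ.filter fun j => X j ω = 0).card < i}
      = ENNReal.ofReal (binomLT n p i) := by
  rw [meas_eq_sum_patE μ X hmeas hlaw _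
      ((Finset.range i).biUnion (fun k => Finset.powersetCard k Finset.univ)) ?hsub ?hsup,
    sum_patE_powersetCard μ X hp0 hp1 hmeas hind hlaw i hin]
  · rw [binomLT, ENNReal.ofReal_sum_of_nonneg]
    · apply Finset.sum_congr rfl
      intro k _
      rw [mul_assoc, ENNReal.ofReal_mul (show (0:ℝ) ≤ (n.choose k : ℝ) by positivity),
        ENNReal.ofReal_natCast, Finset.card_univ, Fintype.card_fin]
    · intro k _
      have h1 : (0:ℝ) ≤ 1 - p := by linarith
      positivity
  case hsub =>
    intro S hS ω hω
    simp only [Finset.mem_biUnion, Finset.mem_range, Finset.mem_powersetCard] at hS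
    obtain ⟨k, hk, _, hcard⟩ := hS
    simp only [Set.mem_setOf_eq, zeroset_of_patE X S ω hω, hcard]
    exact hk
  case hsup =>
    intro ω hbin hA
    simp only [Finset.mem_biUnion, Finset.mem_range, Finset.mem_powersetCard]
    exact ⟨_, hA, Finset.subset_univ _, rfl⟩

lemma meas_one_and_Zlt (hp0 : 0 ≤ p) (hp1 : p ≤ 1) (hmeas : ∀ j, Measurable (X j))
    (hind : iIndepFun X μ)
    (hlaw : ∀ j, Measure.map (X j) μ = bernoulliLaw p)
    (i : ℕ) (hin : i ≤ n) (j : Fin n) :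
    μ ({ω | X j ω = 1} ∩ {ω | (Finset.univ.filter fun k => X k ω = 0).card < i})
      = ENNReal.ofReal (p * binomLT (n-1) p i) := by
  rw [meas_eq_sum_patE μ X hmeas hlaw _
      ((Finset.range i).biUnion (fun k => Finset.powersetCard k (Finset.univ.erase j))) ?hsub ?hsup,
    sum_patE_powersetCard μ X hp0 hp1 hmeas hind hlaw i hin]
  · have hcard : (Finset.univ.erase j).card = n - 1 := by
      rw [Finset.card_erase_of_mem (Finset.mem_univ j), Finset.card_univ, Fintype.card_fin]
    rw [hcard, binomLT, Finset.mul_sum, ENNReal.ofReal_sum_of_nonneg]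
    · apply Finset.sum_congr rfl
      intro k hk
      have hki : k < i := Finset.mem_range.1 hk
      have hpow : p * ((n-1).choose k * (1-p)^k * p^(n-1-k)) = (n-1).choose k * ((1-p)^k * p^(n-k)) := by
        have : n - k = (n - 1 - k) + 1 := by omega
        rw [this, pow_succ]; ring
      rw [hpow, ENNReal.ofReal_mul (show (0:ℝ) ≤ ((n-1).choose k : ℝ) by positivity),
        ENNReal.ofReal_natCast]
    · intro k _
      have h1 : (0:ℝ) ≤ 1 - p := by linarith
      positivity
  case hsub =>
    intro S hS ω hω
    simp only [Finset.mem_biUnion, Finset.mem_range, Finset.mem_powersetCard] at hS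
    obtain ⟨k, hk, hsub, hcard⟩ := hS
    have hjS : j ∉ S := fun hj => (Finset.mem_erase.1 (hsub hj)).1 rfl
    constructor
    · exact ((mem_patE_iff X S ω).1 hω).2 j hjS
    · simp only [Set.mem_setOf_eq, zeroset_of_patE X S ω hω, hcard]
      exact hk
  case hsup =>
    intro ω hbin hA
    obtain ⟨h1, h2⟩ := hA
    simp only [Set.mem_setOf_eq] at h1 h2
    simp only [Finset.mem_biUnion, Finset.mem_range, Finset.mem_powersetCard]
    refine ⟨_, h2, ?_, rfl⟩
    intro k hk
    rw [Finset.mem_erase]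
    refine ⟨?_, Finset.mem_univ k⟩
    intro hkj
    rw [hkj] at hk
    rw [(Finset.mem_filter.1 hk).2] at h1
    norm_num at h1

end
lemma orderStat_binary {Ω : Type*} {n : ℕ} (X : Fin n → Ω → ℝ) (i : ℕ)
    (hi1 : 1 ≤ i) (hin : i ≤ n) (ω : Ω) (hbin : ∀ j, X j ω = 0 ∨ X j ω = 1) :
    orderStat X i ω = if (univ.filter fun j => X j ω = 0).card < i then 1 else 0 := by
  have h : i - 1 < n := by omega
  unfold orderStat
  rw [dif_pos h]
  refine (sort_binary (fun j => X j ω) hbin ⟨i-1, h⟩).trans ?_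
  by_cases hz : (univ.filter fun j => X j ω = 0).card < i
  · rw [if_pos hz, if_neg (by simp; omega)]
  · rw [if_neg hz, if_pos (by simp; omega)]

lemma meas_eq_onG {Ω : Type*} [MeasurableSpace Ω] (μ : Measure Ω) (G A B : Set Ω)
    (hG : ∀ᵐ ω ∂μ, ω ∈ G) (h : ∀ ω ∈ G, ω ∈ A ↔ ω ∈ B) : μ A = μ B := by
  apply measure_congr
  rw [MeasureTheory.ae_eq_set]
  have hGc : μ Gᶜ = 0 := by
    rw [MeasureTheory.ae_iff] at hG
    exact hG
  constructor
  · apply measure_mono_null _ hGc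
    intro ω ⟨hA, hB⟩ hGω
    exact hB ((h ω hGω).1 hA)
  · apply measure_mono_null _ hGc
    intro ω ⟨hB, hA⟩ hGω
    exact hA ((h ω hGω).2 hB)

end
end Aux

theorem stmt5 {Ω : Type*} [MeasurableSpace Ω] (μ : Measure Ω) [IsProbabilityMeasure μ]
    (n : ℕ) (p : ℝ) (hp0 : 0 ≤ p) (hp1 : p ≤ 1) (X : Fin n → Ω → ℝ)
    (hmeas : ∀ j, Measurable (X j))
    (hind : iIndepFun X μ)
    (hlaw : ∀ j, Measure.map (X j) μ = bernoulliLaw p)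
    (i : ℕ) (hi1 : 1 ≤ i) (hin : i ≤ n)
    (h0 : 0 < binomLT n p i) (h1 : binomLT n p i < 1) :
    ∑ j : Fin n,
        ∫ ω, ((∫ ω', X j ω' ∂μ)
            - (μ[X j | MeasurableSpace.comap (orderStat X i) inferInstance]) ω) ^ 2 ∂μ
      = (n : ℝ) * p ^ 2 *
          ((binomLT (n - 1) p i) ^ 2 / binomLT n p i
            + (1 - binomLT (n - 1) p i) ^ 2 / (1 - binomLT n p i) - 1) := by
  classical
  have hp1' : (0:ℝ) ≤ 1 - p := by linarith
  set q := binomLT n p i with hqdef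
  set q' := binomLT (n-1) p i with hq'def
  have hq'0 : 0 ≤ q' := by
    rw [hq'def]; unfold binomLT
    apply Finset.sum_nonneg; intro k _; positivity
  have hq0 : (0:ℝ) ≤ q := le_of_lt h0
  set T := orderStat X i with hTdef
  have hTmeas : Measurable T := measurable_orderStat X hmeas i
  have hm : MeasurableSpace.comap T inferInstance ≤ ‹MeasurableSpace Ω› := hTmeas.comap_le
  have hG : ∀ᵐ ω ∂μ, ω ∈ {ω | ∀ j, X j ω = 0 ∨ X j ω = 1} := ae_binary μ X hmeas hlaw
  set G : Set Ω := {ω | ∀ j, X j ω = 0 ∨ X j ω = 1} with hGdef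
  set Zlt : Set Ω := {ω | (Finset.univ.filter fun j => X j ω = 0).card < i} with hZdef
  have hZm : MeasurableSet Zlt := by
    have hcard : Measurable fun ω => (Finset.univ.filter fun j => X j ω = 0).card := by
      have : (fun ω => (Finset.univ.filter fun j => X j ω = 0).card)
          = fun ω => ∑ j : Fin n, if X j ω = 0 then 1 else 0 := by
        funext ω; exact Finset.card_filter _ _
      rw [this]
      exact Finset.measurable_sum _ fun j _ =>
        Measurable.ite ((hmeas j) (measurableSet_singleton 0)) measurable_const measurable_const
    exact measurableSet_lt hcard measurable_const
  have hTval : ∀ ω ∈ G, T ω = if ω ∈ Zlt then 1 else 0 := fun ω hb =>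
    orderStat_binary X i hi1 hin ω hb
  set D1 : Set Ω := T ⁻¹' {1} with hD1def
  set D0 : Set Ω := T ⁻¹' {0} with hD0def
  have hD1m : MeasurableSet D1 := hTmeas (measurableSet_singleton 1)
  have hD0m : MeasurableSet D0 := hTmeas (measurableSet_singleton 0)
  have hmemD1 : ∀ ω ∈ G, (ω ∈ D1 ↔ ω ∈ Zlt) := by
    intro ω hb
    simp only [hD1def, Set.mem_preimage, Set.mem_singleton_iff, hTval ω hb]
    by_cases hz : ω ∈ Zlt <;> simp [hz]
  have hmemD0 : ∀ ω ∈ G, (ω ∈ D0 ↔ ω ∉ Zlt) := by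
    intro ω hb
    simp only [hD0def, Set.mem_preimage, Set.mem_singleton_iff, hTval ω hb]
    by_cases hz : ω ∈ Zlt <;> simp [hz]
  have hD10 : D1 ∩ D0 = ∅ := by
    ext ω
    simp only [Set.mem_inter_iff, Set.mem_preimage, Set.mem_singleton_iff, Set.mem_empty_iff_false,
      iff_false, not_and, hD1def, hD0def]
    intro h1' h0'; rw [h1'] at h0'; norm_num at h0'
  have hD1v : μ D1 = ENNReal.ofReal q := by
    rw [meas_eq_onG μ G D1 Zlt hG hmemD1, hZdef, hqdef]
    exact meas_Zlt μ X hp0 hp1 hmeas hind hlaw i hin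
  have hD0v : μ D0 = 1 - ENNReal.ofReal q := by
    rw [meas_eq_onG μ G D0 Zltᶜ hG (fun ω hb => hmemD0 ω hb), prob_compl_eq_one_sub hZm,
      hZdef, hqdef]
    rw [meas_Zlt μ X hp0 hp1 hmeas hind hlaw i hin]
  have hq_le1 : ENNReal.ofReal q ≤ 1 := by
    rw [← hD1v]; exact prob_le_one
  -- generic preimage splitting
  have hpre : ∀ C : Set Ω, MeasurableSet C → ∀ B : Set ℝ,
      μ (C ∩ T ⁻¹' B) = (if (1:ℝ) ∈ B then μ (C ∩ D1) else 0)
        + (if (0:ℝ) ∈ B then μ (C ∩ D0) else 0) := by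
    intro C hC B
    have hT01 : ∀ ω ∈ G, T ω = 1 ∨ T ω = 0 := by
      intro ω hb
      rw [hTval ω hb]
      by_cases hz : ω ∈ Zlt <;> simp [hz]
    by_cases h1B : (1:ℝ) ∈ B <;> by_cases h0B : (0:ℝ) ∈ B
    · rw [if_pos h1B, if_pos h0B]
      rw [meas_eq_onG μ G (C ∩ T ⁻¹' B) ((C ∩ D1) ∪ (C ∩ D0)) hG ?_]
      · refine measure_union (Set.disjoint_iff_inter_eq_empty.2 ?_) (hC.inter hD0m)
        ext ω
        simp only [Set.mem_inter_iff, Set.mem_empty_iff_false, iff_false]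
        rintro ⟨⟨-, hx1⟩, -, hx2⟩
        exact Set.eq_empty_iff_forall_notMem.1 hD10 ω ⟨hx1, hx2⟩
      · intro ω hb
        constructor
        · rintro ⟨hCω, hBω⟩
          rcases hT01 ω hb with h | h
          · exact Or.inl ⟨hCω, by simp [hD1def, Set.mem_preimage, h]⟩
          · exact Or.inr ⟨hCω, by simp [hD0def, Set.mem_preimage, h]⟩
        · rintro (⟨hCω, hDω⟩ | ⟨hCω, hDω⟩)
          · simp only [hD1def, Set.mem_preimage, Set.mem_singleton_iff] at hDω
            exact ⟨hCω, by simp [Set.mem_preimage, hDω, h1B]⟩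
          · simp only [hD0def, Set.mem_preimage, Set.mem_singleton_iff] at hDω
            exact ⟨hCω, by simp [Set.mem_preimage, hDω, h0B]⟩
    · rw [if_pos h1B, if_neg h0B, add_zero]
      apply meas_eq_onG μ G _ _ hG
      intro ω hb
      constructor
      · rintro ⟨hCω, hBω⟩
        refine ⟨hCω, ?_⟩
        rcases hT01 ω hb with h | h
        · simp [hD1def, Set.mem_preimage, h]
        · rw [Set.mem_preimage, h] at hBω; exact absurd hBω h0B
      · rintro ⟨hCω, hDω⟩
        simp only [hD1def, Set.mem_preimage, Set.mem_singleton_iff] at hDω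
        exact ⟨hCω, by simp [Set.mem_preimage, hDω, h1B]⟩
    · rw [if_neg h1B, if_pos h0B, zero_add]
      apply meas_eq_onG μ G _ _ hG
      intro ω hb
      constructor
      · rintro ⟨hCω, hBω⟩
        refine ⟨hCω, ?_⟩
        rcases hT01 ω hb with h | h
        · rw [Set.mem_preimage, h] at hBω; exact absurd hBω h1B
        · simp [hD0def, Set.mem_preimage, h]
      · rintro ⟨hCω, hDω⟩
        simp only [hD0def, Set.mem_preimage, Set.mem_singleton_iff] at hDω
        exact ⟨hCω, by simp [Set.mem_preimage, hDω, h0B]⟩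
    · rw [if_neg h1B, if_neg h0B, add_zero]
      rw [meas_eq_onG μ G _ (∅ : Set Ω) hG ?_, measure_empty]
      intro ω hb
      simp only [Set.mem_empty_iff_false, iff_false]
      rintro ⟨hCω, hBω⟩
      rcases hT01 ω hb with h | h
      · rw [Set.mem_preimage, h] at hBω; exact h1B hBω
      · rw [Set.mem_preimage, h] at hBω; exact h0B hBω
  -- constants
  have hq_ne : q ≠ 0 := ne_of_gt h0
  have h1q_pos : (0:ℝ) < 1 - q := by linarith
  have h1q_ne : (1:ℝ) - q ≠ 0 := ne_of_gt h1q_pos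
  set a : ℝ := p * q' / q with hadef
  set b : ℝ := (p - p * q') / (1 - q) with hbdef
  have haq : a * q = p * q' := div_mul_cancel₀ _ hq_ne
  have hbq : b * (1 - q) = p - p * q' := div_mul_cancel₀ _ h1q_ne
  set g : Ω → ℝ := fun ω => if T ω = 1 then a else b with hgdef
  have hgsplit : g = fun ω => D1.indicator (fun _ => a) ω + D1ᶜ.indicator (fun _ => b) ω := by
    funext ω
    by_cases hω : T ω = 1 <;>
      simp [hgdef, Set.indicator_apply, hD1def, Set.mem_preimage, hω]
  have hgint : Integrable g μ := by
    rw [hgsplit]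
    exact ((integrable_const a).indicator hD1m).add ((integrable_const b).indicator hD1m.compl)
  have hsetint : ∀ s : Set Ω, ∀ (c : ℝ) (A : Set Ω), MeasurableSet A →
      ∫ ω in s, A.indicator (fun _ => c) ω ∂μ = (μ (A ∩ s)).toReal * c := by
    intro s c A hA
    rw [integral_indicator hA, setIntegral_const, measureReal_def, Measure.restrict_apply hA, smul_eq_mul]
  have htoReal1q : ((1 : ENNReal) - ENNReal.ofReal q).toReal = 1 - q := by
    rw [ENNReal.toReal_sub_of_le hq_le1 (by simp)]
    simp [ENNReal.toReal_ofReal hq0]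
  -- per-j computation
  have hterm : ∀ j : Fin n,
      ∫ ω, ((∫ ω', X j ω' ∂μ)
          - (μ[X j | MeasurableSpace.comap (orderStat X i) inferInstance]) ω) ^ 2 ∂μ
        = (p - a)^2 * q + (p - b)^2 * (1 - q) := by
    intro j
    have hXj1m : MeasurableSet (X j ⁻¹' {1}) := (hmeas j) (measurableSet_singleton 1)
    have hμXj1 : μ (X j ⁻¹' {1}) = ENNReal.ofReal p := by
      rw [meas_pre μ X hmeas hlaw j _ (measurableSet_singleton 1)]
      norm_num
    have h11 : μ (X j ⁻¹' {1} ∩ D1) = ENNReal.ofReal (p * q') := by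
      have he : μ (X j ⁻¹' {1} ∩ D1) = μ (X j ⁻¹' {1} ∩ Zlt) :=
        meas_eq_onG μ G _ _ hG (fun ω hb => and_congr_right fun _ => hmemD1 ω hb)
      rw [he, hq'def]
      exact meas_one_and_Zlt μ X hp0 hp1 hmeas hind hlaw i hin j
    have hle11 : ENNReal.ofReal (p * q') ≤ ENNReal.ofReal p := by
      rw [← h11, ← hμXj1]; exact measure_mono Set.inter_subset_left
    have h10 : μ (X j ⁻¹' {1} ∩ D0) = ENNReal.ofReal p - ENNReal.ofReal (p * q') := by
      rw [meas_eq_onG μ G _ (X j ⁻¹' {1} \ (X j ⁻¹' {1} ∩ Zlt)) hG ?_]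
      · rw [measure_diff Set.inter_subset_left ((hXj1m.inter hZm)).nullMeasurableSet
          (measure_ne_top μ _), hμXj1]
        congr 1
        rw [hq'def]
        exact meas_one_and_Zlt μ X hp0 hp1 hmeas hind hlaw i hin j
      · intro ω hb
        rw [Set.mem_diff]
        constructor
        · rintro ⟨hx, hd⟩
          exact ⟨hx, fun hmem => ((hmemD0 ω hb).1 hd) hmem.2⟩
        · rintro ⟨hx, hd⟩
          refine ⟨hx, (hmemD0 ω hb).2 fun hz => hd ⟨hx, hz⟩⟩
    have hXind : X j =ᵐ[μ] (X j ⁻¹' {1}).indicator (fun _ => (1:ℝ)) := by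
      filter_upwards [hG] with ω hb
      rcases hb j with h0' | h1'
      · rw [Set.indicator_of_notMem (by simp [Set.mem_preimage, h0'])]
        exact h0'
      · rw [Set.indicator_of_mem (by simp [Set.mem_preimage, h1'])]
        exact h1'
    have hXint : Integrable (X j) μ :=
      (((integrable_const (1:ℝ)).indicator hXj1m)).congr hXind.symm
    have hEX : ∫ ω', X j ω' ∂μ = p := by
      rw [integral_congr_ae hXind, integral_indicator_const _ hXj1m, measureReal_def, hμXj1, smul_eq_mul,
        mul_one, ENNReal.toReal_ofReal hp0]
    -- condexp identification
    have hcond : g =ᵐ[μ] μ[X j | MeasurableSpace.comap T inferInstance] := by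
      apply ae_eq_condExp_of_forall_setIntegral_eq hm hXint
      · intro s _ _; exact hgint.integrableOn
      · rintro s ⟨B, hB, rfl⟩ _
        have hsm0 : MeasurableSet (T ⁻¹' B) := hTmeas hB
        have hlhs : ∫ ω in T ⁻¹' B, g ω ∂μ
            = (μ (D1 ∩ T ⁻¹' B)).toReal * a + (μ (D1ᶜ ∩ T ⁻¹' B)).toReal * b := by
          rw [hgsplit]
          rw [integral_add (((integrable_const a).indicator hD1m)).integrableOn
            (((integrable_const b).indicator hD1m.compl)).integrableOn,
            hsetint _ a D1 hD1m, hsetint _ b D1ᶜ hD1m.compl]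
        have hrhs : ∫ ω in T ⁻¹' B, X j ω ∂μ = (μ (X j ⁻¹' {1} ∩ T ⁻¹' B)).toReal := by
          rw [integral_congr_ae (ae_restrict_of_ae hXind), hsetint _ 1 _ hXj1m, mul_one]
        rw [hlhs, hrhs]
        have e1 : μ (D1 ∩ T ⁻¹' B) = (if (1:ℝ) ∈ B then ENNReal.ofReal q else 0) := by
          rw [hpre D1 hD1m B, Set.inter_self, hD10]
          simp [hD1v]
        have e2 : μ (D1ᶜ ∩ T ⁻¹' B) = (if (0:ℝ) ∈ B then 1 - ENNReal.ofReal q else 0) := by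
          rw [hpre D1ᶜ hD1m.compl B]
          have c1 : D1ᶜ ∩ D1 = ∅ := by rw [Set.inter_comm]; exact Set.inter_compl_self D1
          have c2 : D1ᶜ ∩ D0 = D0 := by
            apply Set.inter_eq_self_of_subset_right
            intro ω hω
            simp only [hD0def, Set.mem_preimage, Set.mem_singleton_iff] at hω
            simp [hD1def, Set.mem_preimage, hω]
          rw [c1, c2, hD0v]
          simp
        have e3 : μ (X j ⁻¹' {1} ∩ T ⁻¹' B)
            = (if (1:ℝ) ∈ B then ENNReal.ofReal (p * q') else 0)
              + (if (0:ℝ) ∈ B then ENNReal.ofReal p - ENNReal.ofReal (p * q') else 0) := by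
          rw [hpre _ hXj1m B, h11, h10]
        rw [e1, e2, e3]
        have ht1 : (ENNReal.ofReal p - ENNReal.ofReal (p * q')).toReal = p - p * q' := by
          rw [ENNReal.toReal_sub_of_le hle11 ENNReal.ofReal_ne_top,
            ENNReal.toReal_ofReal hp0, ENNReal.toReal_ofReal (by positivity)]
        by_cases h1B : (1:ℝ) ∈ B <;> by_cases h0B : (0:ℝ) ∈ B <;>
          simp only [h1B, h0B, if_true, if_false, zero_add, add_zero,
            ENNReal.toReal_zero, zero_mul]
        · rw [ENNReal.toReal_add ENNReal.ofReal_ne_top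
            (ne_top_of_le_ne_top ENNReal.ofReal_ne_top tsub_le_self),
            ENNReal.toReal_ofReal hq0, htoReal1q, ht1,
            ENNReal.toReal_ofReal (by positivity)]
          linarith [haq, hbq]
        · rw [ENNReal.toReal_ofReal hq0, ENNReal.toReal_ofReal (by positivity)]
          linarith [haq]
        · rw [htoReal1q, ht1]
          linarith [hbq]
      · have hTm' : Measurable[MeasurableSpace.comap T inferInstance] T :=
          fun s hs => ⟨s, hs, rfl⟩
        have hφ : Measurable (fun x : ℝ => if x = 1 then a else b) :=
          Measurable.ite (measurableSet_eq) measurable_const measurable_const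
        exact ⟨g, (hφ.comp hTm').stronglyMeasurable, EventuallyEq.rfl⟩
    have hintg : ∫ ω, (p - g ω)^2 ∂μ = (p - a)^2 * q + (p - b)^2 * (1 - q) := by
      have hsq : (fun ω => (p - g ω)^2)
          = fun ω => D1.indicator (fun _ => (p-a)^2) ω + D1ᶜ.indicator (fun _ => (p-b)^2) ω := by
        funext ω
        by_cases hω : T ω = 1 <;>
          simp [hgdef, Set.indicator_apply, hD1def, Set.mem_preimage, hω]
      rw [hsq, integral_add ((integrable_const _).indicator hD1m)
        ((integrable_const _).indicator hD1m.compl),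
        integral_indicator_const _ hD1m, integral_indicator_const _ hD1m.compl, measureReal_def, measureReal_def,
        prob_compl_eq_one_sub hD1m, hD1v, htoReal1q, ENNReal.toReal_ofReal hq0,
        smul_eq_mul, smul_eq_mul]
      ring
    calc ∫ ω, ((∫ ω', X j ω' ∂μ)
          - (μ[X j | MeasurableSpace.comap (orderStat X i) inferInstance]) ω) ^ 2 ∂μ
        = ∫ ω, (p - g ω)^2 ∂μ := by
          apply integral_congr_ae
          filter_upwards [hcond] with ω hω
          rw [hEX, ← hTdef, ← hω]
      _ = (p - a)^2 * q + (p - b)^2 * (1 - q) := hintg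
  rw [Finset.sum_congr rfl fun j _ => hterm j, Finset.sum_const, Finset.card_univ,
    Fintype.card_fin, nsmul_eq_mul]
  rw [hadef, hbdef]
  field_simp
  ring
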